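/- For μ ∈ Γ_{k−1} ⊂ ℝⁿ and each i, the partial derivative ∂/∂μ_i of the quotient σ_k(μ)/σ_{k−1}(μ) equals (σ_{k−1}(μ|i)σ_{k−1}(μ) − σ_k(μ)σ_{k−2}(μ|i))/σ_{k−1}(μ)², and this is nonnegative; hence μ ↦ σ_k(μ)/σ_{k−1}(μ) is monotone nondecreasing in each variable on Γ_{k−1}. -/

import Mathlib

open Finset

/-- The k-th elementary symmetric polynomial of x : Fin n -> R. -/
noncomputable def esymm (n k : ℕ) (x : Fin n → ℝ) : ℝ :=
  ∑ s ∈ Finset.univ.powersetCard k, ∏ i ∈ s, x i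

/-- The Garding cone Gamma_k. -/
def Gamma (n k : ℕ) : Set (Fin n → ℝ) :=
  {x | ∀ j, 1 ≤ j → j ≤ k → 0 < esymm n j x}

/-- The k-th elementary symmetric polynomial of x with the i-th entry deleted. -/
noncomputable def esymmDel (n k : ℕ) (x : Fin n → ℝ) (i : Fin n) : ℝ :=
  ∑ s ∈ (Finset.univ.erase i).powersetCard k, ∏ j ∈ s, x j

/-- Partial derivative of f in the i-th coordinate direction at mu. -/
noncomputable def pdv (n : ℕ) (i : Fin n) (f : (Fin n → ℝ) → ℝ) (μ : Fin n → ℝ) : ℝ :=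
  deriv (fun s => f (Function.update μ i s)) (μ i)


lemma myesymm_cons (a : ℝ) (s : Multiset ℝ) (k : ℕ) :
    (a ::ₘ s).esymm (k+1) = s.esymm (k+1) + a * s.esymm k := by
  rw [Multiset.esymm, Multiset.powersetCard_cons, Multiset.map_add, Multiset.sum_add,
    Multiset.map_map, ← Multiset.esymm]
  congr 1
  rw [Multiset.esymm, ← Multiset.sum_map_mul_left]
  congr 1
  exact Multiset.map_congr rfl fun t _ => Multiset.prod_cons a t

lemma myesymm_zero_of_lt (s : Multiset ℝ) {k : ℕ} (h : Multiset.card s < k) :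
    s.esymm k = 0 := by
  rw [Multiset.esymm, Multiset.powersetCard_eq_empty _ h]
  simp

lemma newton_base (s : Multiset ℝ) : 2 ≤ Multiset.card s →
    2 * (Multiset.card s : ℝ) * s.esymm (Multiset.card s) * s.esymm (Multiset.card s - 2)
      ≤ ((Multiset.card s : ℝ) - 1) * (s.esymm (Multiset.card s - 1))^2 := by
  induction s using Multiset.induction_on with
  | empty => simp
  | cons a s IH => ?_
  intro hcard
  by_cases hs : 2 ≤ Multiset.card s
  · obtain ⟨b, hb⟩ : ∃ b, Multiset.card s = b + 2 := ⟨Multiset.card s - 2, by omega⟩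
    have h0 : s.esymm (b + 3) = 0 := myesymm_zero_of_lt s (by omega)
    have IH' := IH hs
    rw [hb] at IH'
    simp only [Multiset.card_cons, hb] at *
    simp only [show b + 2 + 1 = (b+2)+1 from rfl, show b + 2 + 1 - 1 = b + 2 by omega,
      show b + 2 + 1 - 2 = b + 1 by omega, show b + 2 - 1 = b + 1 by omega,
      show b + 2 - 2 = b by omega] at *
    rw [myesymm_cons, show b + 2 = (b+1)+1 from rfl, myesymm_cons,
      show b + 1 = b+1 from rfl] at *
    rw [show (b+1) = b + 1 from rfl, myesymm_cons] at *
    rw [h0, zero_add]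
    set m : ℝ := ((b:ℝ) + 2) with hm
    set e2 := s.esymm (b + 2)
    set e1 := s.esymm (b + 1)
    set e0 := s.esymm b
    push_cast
    have key : ((b:ℝ)+2) * ((((b:ℝ) + 2 + 1) - 1) * (e2 + a * e1)^2
        - 2 * ((b:ℝ)+2+1) * (a * e2) * (e1 + a * e0))
        = (((b:ℝ)+2) * e2 - a * e1)^2
          + ((b:ℝ)+3) * (a^2 * ((((b:ℝ)+2) - 1) * e1^2 - 2*((b:ℝ)+2) * e2 * e0)) := by
      ring
    have h1 : (0:ℝ) ≤ (((b:ℝ)+2) * e2 - a * e1)^2 := sq_nonneg _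
    have h2 : (0:ℝ) ≤ a^2 * ((((b:ℝ)+2) - 1) * e1^2 - 2*((b:ℝ)+2) * e2 * e0) := by
      apply mul_nonneg (sq_nonneg a)
      have := IH'
      push_cast at this
      linarith
    nlinarith [key, h1, h2]
  · have h1 : Multiset.card s = 1 := by
      simp only [Multiset.card_cons] at hcard; omega
    obtain ⟨c, rfl⟩ := Multiset.card_eq_one.mp h1
    have e2 : (a ::ₘ ({c} : Multiset ℝ)).esymm 2 = a * c := by
      rw [show (2:ℕ) = 1 + 1 from rfl, myesymm_cons]
      simp [Multiset.esymm, Multiset.powersetCard_one]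
    have e1 : (a ::ₘ ({c} : Multiset ℝ)).esymm 1 = a + c := by
      rw [show (1:ℕ) = 0 + 1 from rfl, myesymm_cons]
      simp [Multiset.esymm, Multiset.powersetCard_one]
      ring
    have e0 : (a ::ₘ ({c} : Multiset ℝ)).esymm 0 = 1 := by
      simp [Multiset.esymm]
    simp only [Multiset.card_cons, Multiset.card_singleton]
    norm_num [e2, e1, e0]
    nlinarith [sq_nonneg (a - c)]

open Polynomial in
lemma exists_deriv_multiset (s : Multiset ℝ) (m : ℕ) (hm : Multiset.card s = m)
    (h1 : 1 ≤ m) :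
    ∃ t : Multiset ℝ, Multiset.card t = m - 1 ∧
      ∀ l ≤ m - 1, (m : ℝ) * t.esymm l = ((m - l : ℕ) : ℝ) * s.esymm l := by
  set P := ((s.map Neg.neg).map fun a => X - C a).prod with hP
  have hcard : Multiset.card (s.map Neg.neg) = m := by simp [hm]
  have hdegP : P.natDegree = m := by
    rw [hP, natDegree_multiset_prod_X_sub_C_eq_card, hcard]
  have hProots : P.roots = s.map Neg.neg := roots_multiset_prod_X_sub_C _
  have hPcoeff : ∀ j ≤ m, P.coeff j = s.esymm (m - j) := by
    intro j hj
    rw [hP, Multiset.prod_X_sub_C_coeff _ (by rw [hcard]; exact hj), hcard,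
      Multiset.esymm_neg, ← mul_assoc, ← mul_pow]
    norm_num
  set Q := derivative P with hQ
  have hQcoeff : ∀ j, Q.coeff j = P.coeff (j+1) * (j+1) := fun j => coeff_derivative P j
  have hPm : P.coeff m = 1 := by
    rw [hPcoeff m le_rfl, Nat.sub_self]
    simp [Multiset.esymm]
  have hQtop : Q.coeff (m-1) = m := by
    rw [hQcoeff, show m - 1 + 1 = m by omega, hPm, one_mul]
    norm_cast
    omega
  have hQdeg : Q.natDegree = m - 1 := by
    refine le_antisymm ((natDegree_derivative_le P).trans (by rw [hdegP])) ?_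
    refine le_natDegree_of_ne_zero ?_
    rw [hQtop]
    positivity
  have hQlead : Q.leadingCoeff = m := by
    rw [Polynomial.leadingCoeff, hQdeg, hQtop]
  have hQroots : Multiset.card Q.roots = m - 1 := by
    refine le_antisymm ((Q.card_roots').trans hQdeg.le) ?_
    have h := P.card_roots_le_derivative
    rw [hProots, Multiset.card_map, hm, ← hQ] at h
    omega
  refine ⟨Q.roots.map Neg.neg, by simp [hQroots], ?_⟩
  intro l hl
  have hle : m - 1 - l ≤ Q.natDegree := by rw [hQdeg]; omega
  have hv := Polynomial.coeff_eq_esymm_roots_of_card (hQroots.trans hQdeg.symm) hle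
  rw [hQlead, hQdeg, show m - 1 - (m - 1 - l) = l by omega] at hv
  have hQr : Q.roots.esymm l = (-1)^l * (Q.roots.map Neg.neg).esymm l := by
    rw [Multiset.esymm_neg, ← mul_assoc, ← mul_pow]
    norm_num
  rw [hQr, hQcoeff, show m - 1 - l + 1 = m - l by omega,
    hPcoeff (m - l) (by omega), show m - (m - l) = l by omega] at hv
  have hu : ((-1:ℝ))^l * (-1)^l = 1 := by rw [← mul_pow]; norm_num
  rw [show (m - l) = (m-1-l)+1 by omega, Nat.cast_add_one]
  linear_combination (-1) * hv - (m:ℝ) * ((Multiset.map Neg.neg Q.roots).esymm l) * hu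

/-- normalized Newton: q_{k+1} q_{k-1} ≤ q_k ^ 2 where q_l = (m-l)! l! σ_l. -/
lemma newton_q (m : ℕ) : ∀ (s : Multiset ℝ), Multiset.card s = m → ∀ k, 1 ≤ k →
    (((m - (k+1)).factorial * (k+1).factorial : ℕ) : ℝ) * s.esymm (k+1) *
      ((((m - (k-1)).factorial * (k-1).factorial : ℕ) : ℝ) * s.esymm (k-1)) ≤
    ((((m - k).factorial * k.factorial : ℕ) : ℝ) * s.esymm k)^2 := by
  induction m using Nat.strong_induction_on with
  | _ m IH =>
  intro s hm k hk
  rcases lt_trichotomy m (k+1) with hlt | heq | hgt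
  · rw [myesymm_zero_of_lt s (by omega)]
    simp [sq_nonneg]
  · -- base case m = k + 1
    subst heq
    obtain ⟨b, rfl⟩ : ∃ b, k = b + 1 := ⟨k - 1, by omega⟩
    have hb := newton_base s (by omega)
    rw [hm] at hb
    simp only [show b+1+1-(b+1+1) = 0 by omega, show b+1+1-(b+1) = 1 by omega,
      show b+1+1-(b+1-1) = 2 by omega, show b+1+1-b = 2 by omega, show b+1-1 = b by omega,
      show b+1+1-1 = b+1 by omega, show b+1+1-2 = b by omega] at *
    have hz : Nat.factorial 0 = 1 := rfl
    have ho : Nat.factorial 1 = 1 := rfl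
    have htw : Nat.factorial 2 = 2 := rfl
    have hf1 : ((Nat.factorial 0 * (b+1+1).factorial : ℕ) : ℝ)
        = ((b:ℝ)+2) * ((b:ℝ)+1) * (Nat.factorial b : ℝ) := by
      push_cast [Nat.factorial_succ, hz]; ring
    have hf2 : ((Nat.factorial 2 * Nat.factorial b : ℕ) : ℝ)
        = 2 * (Nat.factorial b : ℝ) := by
      push_cast [htw]; ring
    have hf3 : ((Nat.factorial 1 * (b+1).factorial : ℕ) : ℝ)
        = ((b:ℝ)+1) * (Nat.factorial b : ℝ) := by
      push_cast [Nat.factorial_succ, ho, hz]; ring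
    rw [hf1, hf2, hf3]
    push_cast at hb
    have hmul := mul_le_mul_of_nonneg_left hb
      (by positivity : (0:ℝ) ≤ ((b:ℝ)+1) * (Nat.factorial b : ℝ)^2)
    nlinarith [hmul]
  · -- inductive step
    obtain ⟨t, hct, hrel⟩ := exists_deriv_multiset s m hm (by omega)
    have IH' := IH (m-1) (by omega) t hct k hk
    have key : ∀ l ≤ m - 1,
        (m:ℝ) * ((((m - 1 - l).factorial * l.factorial : ℕ) : ℝ) * t.esymm l)
        = (((m - l).factorial * l.factorial : ℕ) : ℝ) * s.esymm l := by
      intro l hl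
      have h := hrel l hl
      have hfac : ((m - l).factorial : ℝ)
          = ((m - l : ℕ) : ℝ) * ((m - 1 - l).factorial : ℝ) := by
        rw [show m - l = (m - 1 - l) + 1 by omega, Nat.factorial_succ,
          show m - 1 - l + 1 = m - l by omega]
        push_cast
        ring
      push_cast
      rw [hfac]
      linear_combination ((m - 1 - l).factorial : ℝ) * (l.factorial : ℝ) * h
    have e1 := key (k+1) (by omega)
    have e2 := key (k-1) (by omega)
    have e3 := key k (by omega)
    rw [← e1, ← e2, ← e3]
    have h2 : (0:ℝ) ≤ (m:ℝ) * (m:ℝ) := by positivity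
    nlinarith [mul_le_mul_of_nonneg_left IH' h2]

lemma newton_ineq (s : Multiset ℝ) (k : ℕ) (hk : 1 ≤ k) :
    s.esymm (k+1) * s.esymm (k-1) ≤ (s.esymm k)^2 := by
  set m := Multiset.card s with hm
  rcases lt_or_ge m (k+1) with hlt | hge
  · rw [myesymm_zero_of_lt s hlt, zero_mul]
    exact sq_nonneg _
  rcases le_or_gt (s.esymm (k+1) * s.esymm (k-1)) 0 with h0 | h0
  · exact h0.trans (sq_nonneg _)
  have hq := newton_q m s rfl k hk
  obtain ⟨a, ha⟩ : ∃ a, m - k = a + 1 := ⟨m - k - 1, by omega⟩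
  obtain ⟨b, rfl⟩ : ∃ b, k = b + 1 := ⟨k - 1, by omega⟩
  have hia : m - (b+1+1) = a := by omega
  have hib : m - (b+1-1) = a + 2 := by omega
  have hic : b + 1 - 1 = b := by omega
  rw [ha, hia, hib, hic] at hq
  -- coefficient comparison: ((a+1)! (b+1)!)^2 ≤ (a! (b+2)!) ((a+2)! b!)
  have hcmp : (((a+1).factorial * (b+1).factorial : ℕ) : ℝ)^2
      ≤ ((a.factorial * (b+1+1).factorial : ℕ) : ℝ) * (((a+2).factorial * b.factorial : ℕ) : ℝ) := by
    have e : ((a+1).factorial * (b+1).factorial)^2 ≤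
        (a.factorial * (b+2).factorial) * ((a+2).factorial * b.factorial) := by
      have h1 : ((a+1).factorial * (b+1).factorial)^2
          = (a.factorial * b.factorial)^2 * ((a+1)*(a+1)*((b+1)*(b+1))) := by
        simp [Nat.factorial_succ]; ring
      have h2 : (a.factorial * (b+2).factorial) * ((a+2).factorial * b.factorial)
          = (a.factorial * b.factorial)^2 * ((a+2)*(a+1)*((b+2)*(b+1))) := by
        simp [Nat.factorial_succ]; ring
      rw [h1, h2]
      apply Nat.mul_le_mul_left
      apply Nat.mul_le_mul
      · exact Nat.mul_le_mul (Nat.le_succ _) le_rfl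
      · exact Nat.mul_le_mul (Nat.le_succ _) le_rfl
    calc (((a+1).factorial * (b+1).factorial : ℕ) : ℝ)^2
        = (((((a+1).factorial * (b+1).factorial))^2 : ℕ) : ℝ) := by push_cast; ring
      _ ≤ (((a.factorial * (b+2).factorial) * ((a+2).factorial * b.factorial) : ℕ) : ℝ) := by
          exact_mod_cast e
      _ = _ := by push_cast [show b+1+1 = b+2 from rfl]; ring
  -- now combine
  set X := s.esymm (b+1+1) * s.esymm b with hX
  set c1 := ((a.factorial * (b+1+1).factorial : ℕ) : ℝ) * (((a+2).factorial * b.factorial : ℕ) : ℝ)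
  set c2 := (((a+1).factorial * (b+1).factorial : ℕ) : ℝ)^2
  have hq' : c1 * X ≤ c2 * (s.esymm (b+1))^2 := by
    rw [hX]; simp only [c1, c2]; ring_nf; ring_nf at hq; linarith [hq]
  have hc2pos : 0 < c2 := by positivity
  have : c2 * X ≤ c2 * (s.esymm (b+1))^2 := by
    refine le_trans ?_ hq'
    exact mul_le_mul_of_nonneg_right hcmp h0.le
  have := le_of_mul_le_mul_left (by linarith [this] : c2 * X ≤ c2 * (s.esymm (b+1))^2) hc2pos
  simpa [hX] using this

/-- esymmDel as a multiset esymm. -/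
lemma esymmDel_eq_multiset (n k : ℕ) (x : Fin n → ℝ) (i : Fin n) :
    esymmDel n k x i = ((Finset.univ.erase i).val.map x).esymm k := by
  rw [Finset.esymm_map_val]
  rfl

/-- update doesn't change esymmDel at i. -/
lemma esymmDel_update (n k : ℕ) (μ : Fin n → ℝ) (i : Fin n) (s : ℝ) :
    esymmDel n k (Function.update μ i s) i = esymmDel n k μ i := by
  unfold esymmDel
  refine Finset.sum_congr rfl fun t ht => Finset.prod_congr rfl fun j hj => ?_
  apply Function.update_of_ne
  have := Finset.mem_powersetCard.mp ht
  intro hji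
  exact (Finset.ne_of_mem_erase (this.1 hj)) (by rw [hji])

/-- expansion of esymm in the i-th variable. -/
lemma esymm_expand (n k : ℕ) (hk : 1 ≤ k) (x : Fin n → ℝ) (i : Fin n) :
    esymm n k x = esymmDel n k x i + x i * esymmDel n (k-1) x i := by
  obtain ⟨k', rfl⟩ : ∃ k', k = k' + 1 := ⟨k - 1, by omega⟩
  have hiu : (Finset.univ : Finset (Fin n)) = insert i (Finset.univ.erase i) :=
    (Finset.insert_erase (Finset.mem_univ i)).symm
  unfold esymm
  rw [hiu, Finset.powersetCard_succ_insert (Finset.notMem_erase i _)]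
  rw [Finset.sum_union]
  · congr 1
    rw [Finset.sum_image ?hinj]
    case hinj =>
      intro t ht u hu htu
      have hit : i ∉ t := fun h => (Finset.notMem_erase i _) ((Finset.mem_powersetCard.mp ht).1 h)
      have hiu' : i ∉ u := fun h => (Finset.notMem_erase i _) ((Finset.mem_powersetCard.mp hu).1 h)
      have := congrArg (Finset.erase · i) htu
      simpa [Finset.erase_insert hit, Finset.erase_insert hiu'] using this
    rw [show k' + 1 - 1 = k' from rfl, esymmDel, Finset.mul_sum]
    refine Finset.sum_congr rfl fun t ht => ?_
    have hit : i ∉ t := fun h => (Finset.notMem_erase i _) ((Finset.mem_powersetCard.mp ht).1 h)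
    rw [Finset.prod_insert hit]
  · rw [Finset.disjoint_left]
    intro t ht ht'
    have hmem : i ∈ t := by
      obtain ⟨u, hu, rfl⟩ := Finset.mem_image.mp ht'
      exact Finset.mem_insert_self i u
    exact (Finset.notMem_erase i _) ((Finset.mem_powersetCard.mp ht).1 hmem)

/-- The partial derivative of sigma_k/sigma_{k-1} equals the stated quotient and is
nonnegative on Gamma_{k-1}. -/
theorem quotient_pderiv (n k : ℕ) (hk : 2 ≤ k) (hkn : k ≤ n)
    (μ : Fin n → ℝ) (hμ : μ ∈ Gamma n (k - 1)) (i : Fin n) :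
    pdv n i (fun x => esymm n k x / esymm n (k - 1) x) μ =
      (esymmDel n (k - 1) μ i * esymm n (k - 1) μ - esymm n k μ * esymmDel n (k - 2) μ i) /
        (esymm n (k - 1) μ) ^ 2 ∧
    0 ≤ pdv n i (fun x => esymm n k x / esymm n (k - 1) x) μ := by
  have hk1 : 1 ≤ k - 1 := by omega
  set A := esymmDel n k μ i with hA
  set B := esymmDel n (k-1) μ i with hB
  set D := esymmDel n (k-2) μ i with hD
  have hBD : ∀ s : ℝ, esymm n (k-1) (Function.update μ i s) = B + s * D := by
    intro s
    rw [esymm_expand n (k-1) hk1 _ i, esymmDel_update, show k - 1 - 1 = k - 2 by omega,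
      esymmDel_update, Function.update_self]
  have hAB : ∀ s : ℝ, esymm n k (Function.update μ i s) = A + s * B := by
    intro s
    rw [esymm_expand n k (by omega) _ i, esymmDel_update, show k - 1 = k - 1 from rfl,
      esymmDel_update, Function.update_self]
  have hσ' : 0 < esymm n (k-1) μ := hμ (k-1) hk1 le_rfl
  have hupd : Function.update μ i (μ i) = μ := Function.update_eq_self i μ
  have hσ'eq : B + μ i * D = esymm n (k-1) μ := by
    have := hBD (μ i); rw [hupd] at this; exact this.symm
  have hσeq : A + μ i * B = esymm n k μ := by
    have := hAB (μ i); rw [hupd] at this; exact this.symm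
  have hnum : HasDerivAt (fun s : ℝ => A + s * B) B (μ i) := by
    simpa using ((hasDerivAt_id (μ i)).mul_const B).const_add A
  have hden : HasDerivAt (fun s : ℝ => B + s * D) D (μ i) := by
    simpa using ((hasDerivAt_id (μ i)).mul_const D).const_add B
  have hne : B + μ i * D ≠ 0 := by rw [hσ'eq]; exact hσ'.ne'
  have hdiv := hnum.div hden hne
  have hfun : (fun s : ℝ => (fun x => esymm n k x / esymm n (k-1) x) (Function.update μ i s))
      = fun s : ℝ => (A + s * B) / (B + s * D) := by
    funext s
    simp only
    rw [hAB, hBD]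
  have hder : pdv n i (fun x => esymm n k x / esymm n (k-1) x) μ
      = (B * (B + μ i * D) - (A + μ i * B) * D) / (B + μ i * D)^2 := by
    rw [pdv, hfun]
    exact hdiv.deriv
  have hnewton : A * D ≤ B^2 := by
    have h := newton_ineq ((Finset.univ.erase i).val.map μ) (k-1) hk1
    rw [show k - 1 + 1 = k by omega, show k - 1 - 1 = k - 2 by omega] at h
    rw [hA, hB, hD, esymmDel_eq_multiset, esymmDel_eq_multiset, esymmDel_eq_multiset]
    exact h
  constructor
  · rw [hder, hσ'eq, hσeq]
  · rw [hder]
    apply div_nonneg _ (sq_nonneg _)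
    nlinarith [hnewton]
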